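/- Let 𝒢 = (G,w) be a generalized filling of a finite pseudometric space (M,ρ) whose type G = (V,E) is a tree, let X,Y be adjacent interior vertices of degree 3 with w(XY) = −2e < 0, let A,B be the neighbours of X other than Y and C,D the neighbours of Y other than X, and let (G',w') be the modified graph: E' = (E ∖ {XB, YD}) ∪ {XD, YB}, w'(XY) = 2e, w'(XA) = w(XA) − e, w'(YB) = w(XB) − e, w'(YC) = w(YC) − e, w'(XD) = w(YD) − e, w' = w elsewhere. If u,v ∈ M are such that the unique path in G from u to v contains the edge sequence AX, XY, YC (or symmetrically BX, XY, YD), then d_{w'}(u,v) > d_w(u,v). -/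

import Mathlib

open scoped BigOperators

namespace MinFill

variable {V : Type*}

/-- The total weight of a (generalized) weighted graph: the sum of the weights
of its edges. -/
noncomputable def graphWeight (G : SimpleGraph V) (w : Sym2 V → ℝ) : ℝ :=
  ∑ᶠ e ∈ G.edgeSet, w e

/-- The weight of a walk: the sum of the weights of its edges. -/
def walkWeight {G : SimpleGraph V} (w : Sym2 V → ℝ) {u v : V} (p : G.Walk u v) : ℝ :=
  (p.edges.map w).sum

/-- `dw G w u v` is the minimum over simple paths in `G` from `u` to `v` of the
sum of the weights of their edges. -/
noncomputable def dw (G : SimpleGraph V) (w : Sym2 V → ℝ) (u v : V) : ℝ :=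
  sInf {r : ℝ | ∃ p : G.Walk u v, p.IsPath ∧ walkWeight w p = r}

/-- The degree of a vertex: the number of edges incident to it. -/
noncomputable def deg (G : SimpleGraph V) (v : V) : ℕ :=
  (G.neighborSet v).ncard

/-- `ρ` is a pseudometric on the subset `M`: symmetric, nonnegative, vanishing
on the diagonal and satisfying the triangle inequality. -/
def IsPseudometricOn (M : Set V) (ρ : V → V → ℝ) : Prop :=
  (∀ p ∈ M, ∀ q ∈ M, ρ p q = ρ q p) ∧
  (∀ p ∈ M, ∀ q ∈ M, 0 ≤ ρ p q) ∧
  (∀ p ∈ M, ρ p p = 0) ∧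
  (∀ p ∈ M, ∀ q ∈ M, ∀ r ∈ M, ρ p r ≤ ρ p q + ρ q r)

/-- `(G, w)` is a generalized filling of `(M, ρ)` (with `M ⊆ V`): `G` is
connected (and joins `M`), and for all boundary points `p, q ∈ M` every simple
path in `G` from `p` to `q` has weight at least `ρ p q` (equivalently
`ρ p q ≤ d_w(p, q)`). -/
def IsGenFilling (G : SimpleGraph V) (w : Sym2 V → ℝ) (M : Set V) (ρ : V → V → ℝ) : Prop :=
  G.Connected ∧ ∀ p ∈ M, ∀ q ∈ M, ∀ γ : G.Walk p q, γ.IsPath → ρ p q ≤ walkWeight w γ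

open SimpleGraph

lemma path_eq_of_tree {G : SimpleGraph V} (hG : G.IsTree) {a b : V} {p q : G.Walk a b}
    (hp : p.IsPath) (hq : q.IsPath) : p = q := by
  obtain ⟨r, -, hr⟩ := hG.existsUnique_path a b
  rw [hr p hp, hr q hq]

lemma dw_eq_of_tree {G : SimpleGraph V} (hG : G.IsTree) (w : Sym2 V → ℝ) {a b : V}
    (γ : G.Walk a b) (hγ : γ.IsPath) : dw G w a b = walkWeight w γ := by
  have hset : {r : ℝ | ∃ p : G.Walk a b, p.IsPath ∧ walkWeight w p = r} = {walkWeight w γ} := by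
    ext r
    constructor
    · rintro ⟨p, hp, rfl⟩
      rw [path_eq_of_tree hG hp hγ]
      rfl
    · rintro rfl
      exact ⟨γ, hγ, rfl⟩
  rw [dw, hset, csInf_singleton]

lemma not_mem_edge_of_not_mem_support {G : SimpleGraph V} {a b : V} {p : G.Walk a b} {x : V}
    (hx : x ∉ p.support) {f : Sym2 V} (hf : f ∈ p.edges) : x ∉ f := by
  induction f with
  | h c d =>
    intro hm
    rcases Sym2.mem_iff.mp hm with rfl | rfl
    · exact hx (p.fst_mem_support_of_mem_edges hf)
    · exact hx (p.snd_mem_support_of_mem_edges hf)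

lemma not_reachable_of_cut (G₀ : SimpleGraph V) (S : Set V)
    (hS : ∀ ⦃x y : V⦄, G₀.Adj x y → x ∈ S → y ∈ S) {a b : V}
    (ha : a ∈ S) (hb : b ∉ S) : ¬ G₀.Reachable a b := by
  rintro ⟨p⟩
  apply hb
  clear hb
  induction p with
  | nil => exact ha
  | cons h p ih => exact ih (hS h ha)

lemma exists_path_avoiding {G₀ : SimpleGraph V} {z a b : V} (c : G₀.Walk z z)
    (hc : c.IsCycle) (he : s(a, b) ∈ c.edges) :
    ∃ p : G₀.Walk a b, p.IsPath ∧ s(a, b) ∉ p.edges := by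
  classical
  have hnb : ¬ G₀.IsBridge s(a, b) := fun hb =>
    hb.notMem_edges_of_isCycle hc he
  have hadj : G₀.Adj a b := (G₀.mem_edgeSet).mp (c.edges_subset_edgeSet he)
  rw [isBridge_iff_adj_and_forall_walk_mem_edges] at hnb
  push_neg at hnb
  obtain ⟨p, hp⟩ := hnb
  exact ⟨p.bypass, p.bypass_isPath, fun h => hp (p.edges_bypass_subset h)⟩

lemma isAcyclic_add_edge {G₀ : SimpleGraph V} (hA : G₀.IsAcyclic) {a b : V}
    (hab : a ≠ b) (hr : ¬ G₀.Reachable a b) :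
    (SimpleGraph.fromEdgeSet (G₀.edgeSet ∪ {s(a, b)})).IsAcyclic := by
  intro z c hc
  have hsub : ∀ f ∈ (SimpleGraph.fromEdgeSet (G₀.edgeSet ∪ {s(a, b)})).edgeSet,
      f ∈ G₀.edgeSet ∨ f = s(a, b) := by
    intro f hf
    rw [edgeSet_fromEdgeSet] at hf
    exact hf.1
  by_cases hmem : s(a, b) ∈ c.edges
  · obtain ⟨p, hp, hpe⟩ := exists_path_avoiding c hc hmem
    have hpe' : ∀ f ∈ p.edges, f ∈ G₀.edgeSet := by
      intro f hf
      rcases hsub f (p.edges_subset_edgeSet hf) with h | rfl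
      · exact h
      · exact absurd hf hpe
    exact hr ⟨p.transfer G₀ hpe'⟩
  · have hce : ∀ f ∈ c.edges, f ∈ G₀.edgeSet := by
      intro f hf
      rcases hsub f (c.edges_subset_edgeSet hf) with h | rfl
      · exact h
      · exact absurd hf hmem
    exact hA (c.transfer G₀ hce) (hc.transfer hce)

lemma no_walk_avoiding {G : SimpleGraph V} (hG : G.IsTree) {a b : V} {f : Sym2 V}
    (π : G.Walk a b) (hπ : π.IsPath) (hf : f ∈ π.edges)
    (p : G.Walk a b) (hp : f ∉ p.edges) : False := by
  classical
  have h := path_eq_of_tree hG p.bypass_isPath hπ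
  exact hp (p.edges_bypass_subset (h ▸ hf))

lemma decomp_at_edge {G₀ : SimpleGraph V} {a b x y : V} (p : G₀.Walk a b)
    (hxy : s(x, y) ∈ p.edges) :
    (∃ (q : G₀.Walk a x) (h : G₀.Adj x y) (r : G₀.Walk y b),
        p = q.append (SimpleGraph.Walk.cons h r)) ∨
    (∃ (q : G₀.Walk a y) (h : G₀.Adj y x) (r : G₀.Walk x b),
        p = q.append (SimpleGraph.Walk.cons h r)) := by
  induction p with
  | nil => simp at hxy
  | @cons a c b h' p' ih =>
    rw [Walk.edges_cons, List.mem_cons] at hxy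
    rcases hxy with he | he
    · rw [Sym2.eq_iff] at he
      rcases he with ⟨rfl, rfl⟩ | ⟨rfl, rfl⟩
      · exact Or.inl ⟨Walk.nil, h', p', (p'.cons h' |>.nil_append).symm⟩
      · exact Or.inr ⟨Walk.nil, h', p', (p'.cons h' |>.nil_append).symm⟩
    · rcases ih he with ⟨q, h, r, rfl⟩ | ⟨q, h, r, rfl⟩
      · exact Or.inl ⟨Walk.cons h' q, h, r, (Walk.cons_append h' q _).symm⟩
      · exact Or.inr ⟨Walk.cons h' q, h, r, (Walk.cons_append h' q _).symm⟩

lemma path_head {G₀ : SimpleGraph V} {m b t : V} (p : G₀.Walk m b) (hp : p.IsPath)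
    (he : s(m, t) ∈ p.edges) :
    ∃ (h : G₀.Adj m t) (r : G₀.Walk t b), p = SimpleGraph.Walk.cons h r := by
  rcases decomp_at_edge p he with ⟨q, h, r, rfl⟩ | ⟨q, h, r, rfl⟩
  · have hq : q = Walk.nil := Walk.isPath_iff_eq_nil.mp hp.of_append_left
    subst hq
    exact ⟨h, r, (Walk.nil_append _).symm⟩
  · exfalso
    have hnd := hp.support_nodup
    rw [Walk.support_append, List.nodup_append] at hnd
    exact hnd.2.2 _ q.start_mem_support _ (by simp) rfl

lemma walkWeight_append {G : SimpleGraph V} (w : Sym2 V → ℝ) {a b c : V}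
    (p : G.Walk a b) (q : G.Walk b c) :
    walkWeight w (p.append q) = walkWeight w p + walkWeight w q := by
  simp [walkWeight, Walk.edges_append]

lemma walkWeight_cons {G : SimpleGraph V} (w : Sym2 V → ℝ) {a b c : V}
    (h : G.Adj a b) (p : G.Walk b c) :
    walkWeight w (Walk.cons h p) = w s(a, b) + walkWeight w p := by
  simp [walkWeight]

lemma walkWeight_transfer {G H : SimpleGraph V} (w : Sym2 V → ℝ) {a b : V}
    (p : G.Walk a b) (hp : ∀ e ∈ p.edges, e ∈ H.edgeSet) :
    walkWeight w (p.transfer H hp) = walkWeight w p := by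
  simp [walkWeight, Walk.edges_transfer]

lemma walkWeight_congr {G : SimpleGraph V} {w w' : Sym2 V → ℝ} {a b : V}
    (p : G.Walk a b) (h : ∀ e ∈ p.edges, w' e = w e) :
    walkWeight w' p = walkWeight w p := by
  unfold walkWeight
  congr 1
  exact List.map_congr_left h

lemma core {G G' : SimpleGraph V} (hGt : G.IsTree) (hG't : G'.IsTree)
    (w w' : Sym2 V → ℝ) (e : ℝ) (he : 0 < e)
    {u v a d m₁ m₂ n₁ n₂ : V}
    (hmn : (n₁ = m₁ ∧ n₂ = m₂) ∨ (n₁ = m₂ ∧ n₂ = m₁))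
    (q₁ : G.Walk u a) (r₂ : G.Walk d v)
    (h₁ : G.Adj a m₁) (h₂ : G.Adj m₁ m₂) (h₃ : G.Adj m₂ d)
    (h₁' : G'.Adj a n₁) (h₂' : G'.Adj n₁ n₂) (h₃' : G'.Adj n₂ d)
    (hγ : (q₁.append (Walk.cons h₁ (Walk.cons h₂ (Walk.cons h₃ r₂)))).IsPath)
    (hq : ∀ f ∈ q₁.edges, f ∈ G'.edgeSet ∧ w' f = w f)
    (hr : ∀ f ∈ r₂.edges, f ∈ G'.edgeSet ∧ w' f = w f)
    (hw : w' s(a, n₁) + w' s(n₁, n₂) + w' s(n₂, d)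
        = w s(a, m₁) + w s(m₁, m₂) + w s(m₂, d) + 2 * e) :
    dw G w u v < dw G' w' u v := by
  set γ := q₁.append (Walk.cons h₁ (Walk.cons h₂ (Walk.cons h₃ r₂))) with hγdef
  set q₁' := q₁.transfer G' (fun f hf => (hq f hf).1) with hq₁'
  set r₂' := r₂.transfer G' (fun f hf => (hr f hf).1) with hr₂'
  set γ' := q₁'.append (Walk.cons h₁' (Walk.cons h₂' (Walk.cons h₃' r₂'))) with hγ'def
  have hsupγ : γ.support = q₁.support ++ (m₁ :: m₂ :: r₂.support) := by
    rw [hγdef, Walk.support_append]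
    simp [Walk.support_cons]
  have hsupγ' : γ'.support = q₁.support ++ (n₁ :: n₂ :: r₂.support) := by
    rw [hγ'def, Walk.support_append]
    simp [Walk.support_cons, hq₁', hr₂', Walk.support_transfer]
  have hperm : γ.support.Perm γ'.support := by
    rw [hsupγ, hsupγ']
    rcases hmn with ⟨rfl, rfl⟩ | ⟨rfl, rfl⟩
    · exact List.Perm.refl _
    · exact List.Perm.append_left _ (List.Perm.swap _ _ _)
  have hγ'path : γ'.IsPath := by
    rw [Walk.isPath_def] at hγ ⊢
    exact (hperm.nodup_iff).mp hγ
  have hd1 : dw G w u v = walkWeight w γ := dw_eq_of_tree hGt w γ hγ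
  have hd2 : dw G' w' u v = walkWeight w' γ' := dw_eq_of_tree hG't w' γ' hγ'path
  have hwq : walkWeight w' q₁' = walkWeight w q₁ := by
    rw [hq₁', walkWeight_transfer]
    exact walkWeight_congr q₁ (fun f hf => (hq f hf).2)
  have hwr : walkWeight w' r₂' = walkWeight w r₂ := by
    rw [hr₂', walkWeight_transfer]
    exact walkWeight_congr r₂ (fun f hf => (hr f hf).2)
  rw [hd1, hd2, hγdef, hγ'def]
  rw [walkWeight_append, walkWeight_append, walkWeight_cons, walkWeight_cons,
    walkWeight_cons, walkWeight_cons, walkWeight_cons, walkWeight_cons, hwq, hwr]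
  linarith

lemma split {G : SimpleGraph V} {u v x y p t : V}
    (q : G.Walk u x) (hq : G.Adj x y) (r : G.Walk y v)
    (hγ : (q.append (Walk.cons hq r)).IsPath)
    (hp : s(p, x) ∈ (q.append (Walk.cons hq r)).edges) (hpy : p ≠ y)
    (ht : s(y, t) ∈ (q.append (Walk.cons hq r)).edges) (htx : t ≠ x) :
    ∃ (q₁ : G.Walk u p) (h₁ : G.Adj p x) (h₃ : G.Adj y t) (r₂ : G.Walk t v),
      (q₁.append (Walk.cons h₁ (Walk.cons hq (Walk.cons h₃ r₂)))).IsPath ∧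
      (∀ f ∈ q₁.edges, x ∉ f ∧ y ∉ f) ∧
      (∀ f ∈ r₂.edges, x ∉ f ∧ y ∉ f) := by
  have hqp : q.IsPath := hγ.of_append_left
  have hcp : (Walk.cons hq r).IsPath := hγ.of_append_right
  have hrp : r.IsPath := hcp.of_cons
  have hxy : x ≠ y := hq.ne
  have hnd : (q.support ++ r.support).Nodup := by
    have := hγ.support_nodup
    rwa [Walk.support_append, Walk.support_cons, List.tail_cons] at this
  rw [List.nodup_append'] at hnd
  obtain ⟨-, -, hdisj⟩ := hnd
  rw [Walk.edges_append, Walk.edges_cons] at hp ht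
  have hpq : s(p, x) ∈ q.edges := by
    rcases List.mem_append.mp hp with h | h
    · exact h
    · rcases List.mem_cons.mp h with h | h
      · rw [Sym2.eq_iff] at h
        rcases h with ⟨h1, h2⟩ | ⟨h1, h2⟩
        · exact absurd h2 hxy
        · exact absurd h1 hpy
      · exact absurd (q.end_mem_support) (fun hx => hdisj hx (r.snd_mem_support_of_mem_edges h))
  have htr : s(y, t) ∈ r.edges := by
    rcases List.mem_append.mp ht with h | h
    · exact absurd (q.fst_mem_support_of_mem_edges h)
        (fun hy => hdisj hy r.start_mem_support)
    · rcases List.mem_cons.mp h with h | h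
      · rw [Sym2.eq_iff] at h
        rcases h with ⟨h1, h2⟩ | ⟨h1, h2⟩
        · exact absurd h1 hxy.symm
        · exact absurd h2 htx
      · exact h
  obtain ⟨h₁x, r₁, hqrev⟩ := path_head q.reverse hqp.reverse
    (by rw [Walk.edges_reverse, List.mem_reverse, Sym2.eq_swap]; exact hpq)
  obtain ⟨h₃, r₂, hr_eq⟩ := path_head r hrp htr
  have hq_eq : q = r₁.reverse.append (Walk.cons h₁x.symm Walk.nil) := by
    have := congrArg Walk.reverse hqrev
    rwa [Walk.reverse_reverse, Walk.reverse_cons] at this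
  subst hr_eq
  have hsupq : q.support = r₁.reverse.support ++ [x] := by
    rw [hq_eq, Walk.support_append]
    simp
  have hxnotq : x ∉ r₁.reverse.support := by
    have hnd2 := hqp.support_nodup
    rw [hsupq, List.nodup_append'] at hnd2
    exact fun hx => hnd2.2.2 hx (by simp)
  have hynotq : y ∉ r₁.reverse.support := fun hy =>
    hdisj (by rw [hsupq]; exact List.mem_append_left _ hy) (Walk.start_mem_support _)
  have hynotr : y ∉ r₂.support := ((Walk.cons_isPath_iff _ _).mp hrp).2
  have hxnotr : x ∉ r₂.support := fun hx =>
    hdisj q.end_mem_support (by rw [Walk.support_cons]; exact List.mem_cons_of_mem _ hx)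
  refine ⟨r₁.reverse, h₁x.symm, h₃, r₂, ?_, ?_, ?_⟩
  · have hEq : (r₁.reverse.append (Walk.cons h₁x.symm Walk.nil)).append
        (Walk.cons hq (Walk.cons h₃ r₂)) =
        r₁.reverse.append (Walk.cons h₁x.symm (Walk.cons hq (Walk.cons h₃ r₂))) := by
      rw [← Walk.append_assoc, Walk.cons_append, Walk.nil_append]
    rw [← hEq, ← hq_eq]
    exact hγ
  · exact fun f hf => ⟨not_mem_edge_of_not_mem_support hxnotq hf,
      not_mem_edge_of_not_mem_support hynotq hf⟩
  · exact fun f hf => ⟨not_mem_edge_of_not_mem_support hxnotr hf,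
      not_mem_edge_of_not_mem_support hynotr hf⟩

lemma sym2_ne {a b c d : V} (h1 : a = c → b ≠ d) (h2 : a = d → b ≠ c) :
    s(a, b) ≠ s(c, d) := by
  intro hh
  rw [Sym2.eq_iff] at hh
  rcases hh with ⟨rfl, h⟩ | ⟨rfl, h⟩
  · exact h1 rfl h
  · exact h2 rfl h

lemma adj_G'_of_G {G G' : SimpleGraph V} {X Y B D : V}
    (hG' : G' = SimpleGraph.fromEdgeSet
      ((G.edgeSet \ {s(X, B), s(Y, D)}) ∪ {s(X, D), s(Y, B)}))
    {a b : V} (hab : G.Adj a b) (h1 : s(a, b) ≠ s(X, B)) (h2 : s(a, b) ≠ s(Y, D)) :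
    G'.Adj a b := by
  rw [hG', fromEdgeSet_adj]
  exact ⟨Or.inl ⟨hab, by simp [h1, h2]⟩, hab.ne⟩

lemma adj_G'_XD {G G' : SimpleGraph V} {X Y B D : V}
    (hG' : G' = SimpleGraph.fromEdgeSet
      ((G.edgeSet \ {s(X, B), s(Y, D)}) ∪ {s(X, D), s(Y, B)}))
    (h : X ≠ D) : G'.Adj X D := by
  rw [hG', fromEdgeSet_adj]
  exact ⟨Or.inr (by simp), h⟩

lemma adj_G'_YB {G G' : SimpleGraph V} {X Y B D : V}
    (hG' : G' = SimpleGraph.fromEdgeSet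
      ((G.edgeSet \ {s(X, B), s(Y, D)}) ∪ {s(X, D), s(Y, B)}))
    (h : Y ≠ B) : G'.Adj Y B := by
  rw [hG', fromEdgeSet_adj]
  exact ⟨Or.inr (by simp), h⟩

lemma G'_isTree {G : SimpleGraph V} (hG : G.IsTree) {X Y B D : V}
    (hXY : G.Adj X Y) (hXB : G.Adj X B) (hYD : G.Adj Y D)
    (hBY : B ≠ Y) (hDX : D ≠ X)
    (G' : SimpleGraph V)
    (hG' : G' = SimpleGraph.fromEdgeSet
      ((G.edgeSet \ {s(X, B), s(Y, D)}) ∪ {s(X, D), s(Y, B)})) :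
    G'.IsTree := by
  classical
  have hXYne : X ≠ Y := hXY.ne
  have hXBne : X ≠ B := hXB.ne
  have hYDne : Y ≠ D := hYD.ne
  have hBD : B ≠ D := by
    intro hbd
    subst hbd
    have p1 : (Walk.cons hXB Walk.nil : G.Walk X B).IsPath := by
      simp [Walk.isPath_def, hXBne]
    have p2 : (Walk.cons hXY (Walk.cons hYD Walk.nil) : G.Walk X B).IsPath := by
      simp [Walk.isPath_def, hXYne, hXBne, hYDne]
    have := congrArg Walk.length (path_eq_of_tree hG p1 p2)
    simp at this
  set H : SimpleGraph V := SimpleGraph.fromEdgeSet (G.edgeSet \ {s(X, B), s(Y, D)}) with hH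
  have hHsub : ∀ f ∈ H.edgeSet, f ∈ G.edgeSet ∧ f ≠ s(X, B) ∧ f ≠ s(Y, D) := by
    intro f hf
    rw [hH, edgeSet_fromEdgeSet] at hf
    obtain ⟨⟨h1, h2⟩, -⟩ := hf
    simp only [Set.mem_insert_iff, Set.mem_singleton_iff] at h2
    push_neg at h2
    exact ⟨h1, h2⟩
  have hHacyc : H.IsAcyclic := by
    intro z c hc
    have hce : ∀ f ∈ c.edges, f ∈ G.edgeSet := fun f hf =>
      (hHsub f (c.edges_subset_edgeSet hf)).1
    exact hG.IsAcyclic (c.transfer G hce) (hc.transfer hce)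
  have hHXD : ¬ H.Reachable X D := by
    rintro ⟨p⟩
    have hpe : ∀ f ∈ p.edges, f ∈ G.edgeSet := fun f hf =>
      (hHsub f (p.edges_subset_edgeSet hf)).1
    have hXDne : X ≠ D := fun h => hDX h.symm
    refine no_walk_avoiding (f := s(Y, D)) hG (Walk.cons hXY (Walk.cons hYD Walk.nil))
      (by simp [Walk.isPath_def, hXYne, hXDne, hYDne])
      (by simp) (p.transfer G hpe) ?_
    rw [Walk.edges_transfer]
    exact fun hf => (hHsub _ (p.edges_subset_edgeSet hf)).2.2 rfl
  set H₁ : SimpleGraph V := SimpleGraph.fromEdgeSet (H.edgeSet ∪ {s(X, D)}) with hH₁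
  have hH₁acyc : H₁.IsAcyclic := isAcyclic_add_edge hHacyc (fun h => hDX h.symm) hHXD
  set S : Set V := {z | ∃ p : G.Walk z B, p.IsPath ∧ s(X, B) ∉ p.edges} with hS
  have hXS : X ∉ S := by
    rintro ⟨p, hp, hpe⟩
    exact no_walk_avoiding (f := s(X, B)) hG (Walk.cons hXB Walk.nil)
      (by simp [Walk.isPath_def, hXBne]) (by simp) p hpe
  have hDS : D ∉ S := by
    rintro ⟨p, hp, hpe⟩
    refine no_walk_avoiding (f := s(X, B)) hG
      (Walk.cons hYD.symm (Walk.cons hXY.symm (Walk.cons hXB Walk.nil)))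
      ?_ (by simp) p hpe
    simp [Walk.isPath_def, Ne.symm hYDne, hDX, Ne.symm hBD, Ne.symm hXYne,
      Ne.symm hBY, hXBne]
  have hstep : ∀ ⦃z z' : V⦄, H₁.Adj z z' → z ∈ S → z' ∈ S := by
    intro z z' hzz hz
    have hzz' : s(z, z') ∈ H.edgeSet ∪ {s(X, D)} := by
      rw [hH₁, fromEdgeSet_adj] at hzz
      exact hzz.1
    rcases hzz' with hmem | hnew
    · obtain ⟨hE, hne1, -⟩ := hHsub _ hmem
      obtain ⟨p, hp, hpe⟩ := hz
      have hadj : G.Adj z' z := (G.mem_edgeSet.mp hE).symm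
      refine ⟨(Walk.cons hadj p).bypass, Walk.bypass_isPath _, fun hmem2 => ?_⟩
      have hq := Walk.edges_bypass_subset _ hmem2
      rw [Walk.edges_cons] at hq
      rcases List.mem_cons.mp hq with h | h
      · exact hne1 ((Sym2.eq_swap).trans h.symm)
      · exact hpe h
    · simp only [Set.mem_singleton_iff] at hnew
      rw [Sym2.eq_iff] at hnew
      rcases hnew with ⟨rfl, rfl⟩ | ⟨rfl, rfl⟩
      · exact absurd hz hXS
      · exact absurd hz hDS
  have hBS : B ∈ S := ⟨Walk.nil, by simp [Walk.isPath_def], by simp⟩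
  have hYS : Y ∉ S := by
    rintro ⟨p, hp, hpe⟩
    exact no_walk_avoiding (f := s(X, B)) hG (Walk.cons hXY.symm (Walk.cons hXB Walk.nil))
      (by simp [Walk.isPath_def, Ne.symm hXYne, Ne.symm hBY, hXBne]) (by simp) p hpe
  have hH₁YB : ¬ H₁.Reachable Y B := fun h =>
    not_reachable_of_cut H₁ S hstep hBS hYS h.symm
  have hG'eq : G' = SimpleGraph.fromEdgeSet (H₁.edgeSet ∪ {s(Y, B)}) := by
    rw [hG']
    ext z z'
    simp only [fromEdgeSet_adj, hH₁, hH, edgeSet_fromEdgeSet, Set.mem_union, Set.mem_diff,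
      Set.mem_insert_iff, Set.mem_singleton_iff, Set.mem_setOf_eq, Sym2.mk_isDiag_iff]
    constructor
    · rintro ⟨h1, h2⟩
      exact ⟨by tauto, h2⟩
    · rintro ⟨h1, h2⟩
      exact ⟨by tauto, h2⟩
  have hG'acyc : G'.IsAcyclic := by
    rw [hG'eq]
    exact isAcyclic_add_edge hH₁acyc (fun h => hBY h.symm) hH₁YB
  -- connectivity
  have hXY' : G'.Adj X Y := adj_G'_of_G hG' hXY
    (sym2_ne (fun _ => Ne.symm hBY) (fun h => (hXBne h).elim))
    (sym2_ne (fun h => (hXYne h).elim) (fun h => (hDX h.symm).elim))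
  have hYB' : G'.Adj Y B := adj_G'_YB hG' (Ne.symm hBY)
  have hXD' : G'.Adj X D := adj_G'_XD hG' (Ne.symm hDX)
  have hstepR : ∀ {a b : V}, G.Adj a b → G'.Reachable a b := by
    intro a b hab
    by_cases h1 : s(a, b) = s(X, B)
    · have hreach : G'.Reachable X B := ⟨Walk.cons hXY' (Walk.cons hYB' Walk.nil)⟩
      rw [Sym2.eq_iff] at h1
      rcases h1 with ⟨rfl, rfl⟩ | ⟨rfl, rfl⟩
      · exact hreach
      · exact hreach.symm
    · by_cases h2 : s(a, b) = s(Y, D)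
      · have hreach : G'.Reachable Y D := ⟨Walk.cons hXY'.symm (Walk.cons hXD' Walk.nil)⟩
        rw [Sym2.eq_iff] at h2
        rcases h2 with ⟨rfl, rfl⟩ | ⟨rfl, rfl⟩
        · exact hreach
        · exact hreach.symm
      · exact (adj_G'_of_G hG' hab h1 h2).reachable
  have hpre : G'.Preconnected := by
    intro a b
    obtain ⟨p⟩ := hG.isConnected.preconnected a b
    induction p with
    | nil => exact Reachable.refl _
    | cons h p ih => exact (hstepR h).trans ih
  have hne : Nonempty V := hG.isConnected.nonempty
  exact ⟨⟨hpre⟩, hG'acyc⟩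

/-- If the unique path in `G` between boundary points `u, v`
contains the edge sequence `AX, XY, YC` (or symmetrically `BX, XY, YD`), then
the modification strictly increases the distance between `u` and `v`. -/
theorem modification_increases_dist {V : Type*} [Fintype V] (G : SimpleGraph V)
    (hG : G.IsTree)
    (M : Set V) (ρ : V → V → ℝ) (hρ : IsPseudometricOn M ρ)
    (w : Sym2 V → ℝ) (hfill : IsGenFilling G w M ρ)
    (X Y A B C D : V) (e : ℝ) (he : 0 < e)
    (hXM : X ∉ M) (hYM : Y ∉ M) (hdX : deg G X = 3) (hdY : deg G Y = 3)
    (hXY : G.Adj X Y) (hXA : G.Adj X A) (hXB : G.Adj X B)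
    (hYC : G.Adj Y C) (hYD : G.Adj Y D)
    (hAB : A ≠ B) (hAY : A ≠ Y) (hBY : B ≠ Y)
    (hCD : C ≠ D) (hCX : C ≠ X) (hDX : D ≠ X)
    (hwXY : w s(X, Y) = -2 * e)
    (G' : SimpleGraph V)
    (hG' : G' = SimpleGraph.fromEdgeSet
      ((G.edgeSet \ {s(X, B), s(Y, D)}) ∪ {s(X, D), s(Y, B)}))
    (w' : Sym2 V → ℝ)
    (h1 : w' s(X, Y) = 2 * e) (h2 : w' s(X, A) = w s(X, A) - e)
    (h3 : w' s(Y, B) = w s(X, B) - e) (h4 : w' s(Y, C) = w s(Y, C) - e)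
    (h5 : w' s(X, D) = w s(Y, D) - e)
    (h6 : ∀ f ∈ G'.edgeSet,
      f ∉ ({s(X, Y), s(X, A), s(Y, B), s(Y, C), s(X, D)} : Set (Sym2 V)) →
        w' f = w f)
    (u v : V) (hu : u ∈ M) (hv : v ∈ M)
    (hpath : (∃ γ : G.Walk u v, γ.IsPath ∧ s(A, X) ∈ γ.edges ∧
                s(X, Y) ∈ γ.edges ∧ s(Y, C) ∈ γ.edges) ∨
             (∃ γ : G.Walk u v, γ.IsPath ∧ s(B, X) ∈ γ.edges ∧
                s(X, Y) ∈ γ.edges ∧ s(Y, D) ∈ γ.edges)) :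
    dw G w u v < dw G' w' u v := by
  classical
  have hG't : G'.IsTree := G'_isTree hG hXY hXB hYD hBY hDX G' hG'
  have hXY' : G'.Adj X Y := adj_G'_of_G hG' hXY
    (sym2_ne (fun _ => Ne.symm hBY) (fun h => (hXB.ne h).elim))
    (sym2_ne (fun h => (hXY.ne h).elim) (fun h => (hDX h.symm).elim))
  have hXA' : G'.Adj X A := adj_G'_of_G hG' hXA
    (sym2_ne (fun _ => hAB) (fun h => (hXB.ne h).elim))
    (sym2_ne (fun h => (hXY.ne h).elim) (fun h => (hDX h.symm).elim))
  have hYC' : G'.Adj Y C := adj_G'_of_G hG' hYC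
    (sym2_ne (fun h => (hXY.ne h.symm).elim) (fun _ => hCX))
    (sym2_ne (fun _ => hCD) (fun h => (hYD.ne h).elim))
  have hYB' : G'.Adj Y B := adj_G'_YB hG' (Ne.symm hBY)
  have hXD' : G'.Adj X D := adj_G'_XD hG' (Ne.symm hDX)
  have hgood : ∀ f ∈ G.edgeSet, X ∉ f → Y ∉ f → f ∈ G'.edgeSet ∧ w' f = w f := by
    intro f hf hXf hYf
    have hf1 : f ∈ G'.edgeSet := by
      rw [hG', SimpleGraph.edgeSet_fromEdgeSet]
      refine ⟨Or.inl ⟨hf, ?_⟩, G.not_isDiag_of_mem_edgeSet hf⟩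
      simp only [Set.mem_insert_iff, Set.mem_singleton_iff]
      push_neg
      refine ⟨fun h => ?_, fun h => ?_⟩ <;> subst h
      · exact hXf (by simp)
      · exact hYf (by simp)
    refine ⟨hf1, h6 f hf1 ?_⟩
    simp only [Set.mem_insert_iff, Set.mem_singleton_iff]
    push_neg
    refine ⟨fun h => ?_, fun h => ?_, fun h => ?_, fun h => ?_, fun h => ?_⟩ <;> subst h
    · exact hXf (by simp)
    · exact hXf (by simp)
    · exact hYf (by simp)
    · exact hYf (by simp)
    · exact hXf (by simp)
  rcases hpath with ⟨γ, hγ, hm1, hm2, hm3⟩ | ⟨γ, hγ, hm1, hm2, hm3⟩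
  · rcases decomp_at_edge γ hm2 with ⟨q, hq, r, rfl⟩ | ⟨q, hq, r, rfl⟩
    · obtain ⟨q₁, h₁, h₃, r₂, hP, hq₁e, hr₂e⟩ := split q hq r hγ hm1 hAY hm3 hCX
      refine core hG hG't w w' e he (Or.inl ⟨rfl, rfl⟩) q₁ r₂ h₁ hq h₃
        hXA'.symm hXY' hYC' hP
        (fun f hf => hgood f (q₁.edges_subset_edgeSet hf) (hq₁e f hf).1 (hq₁e f hf).2)
        (fun f hf => hgood f (r₂.edges_subset_edgeSet hf) (hr₂e f hf).1 (hr₂e f hf).2)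
        ?_
      rw [show s(A, X) = s(X, A) from Sym2.eq_swap, h2, h1, h4, hwXY]
      ring
    · obtain ⟨q₁, h₁, h₃, r₂, hP, hq₁e, hr₂e⟩ := split q hq r hγ
        (by rw [Sym2.eq_swap]; exact hm3) hCX (by rw [Sym2.eq_swap]; exact hm1) hAY
      refine core hG hG't w w' e he (Or.inl ⟨rfl, rfl⟩) q₁ r₂ h₁ hq h₃
        hYC'.symm hXY'.symm hXA' hP
        (fun f hf => hgood f (q₁.edges_subset_edgeSet hf) (hq₁e f hf).2 (hq₁e f hf).1)
        (fun f hf => hgood f (r₂.edges_subset_edgeSet hf) (hr₂e f hf).2 (hr₂e f hf).1)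
        ?_
      rw [show s(C, Y) = s(Y, C) from Sym2.eq_swap, show s(Y, X) = s(X, Y) from Sym2.eq_swap,
        h4, h1, h2, hwXY]
      ring
  · rcases decomp_at_edge γ hm2 with ⟨q, hq, r, rfl⟩ | ⟨q, hq, r, rfl⟩
    · obtain ⟨q₁, h₁, h₃, r₂, hP, hq₁e, hr₂e⟩ := split q hq r hγ hm1 hBY hm3 hDX
      refine core hG hG't w w' e he (Or.inr ⟨rfl, rfl⟩) q₁ r₂ h₁ hq h₃
        hYB'.symm hXY'.symm hXD' hP
        (fun f hf => hgood f (q₁.edges_subset_edgeSet hf) (hq₁e f hf).1 (hq₁e f hf).2)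
        (fun f hf => hgood f (r₂.edges_subset_edgeSet hf) (hr₂e f hf).1 (hr₂e f hf).2)
        ?_
      rw [show s(B, Y) = s(Y, B) from Sym2.eq_swap, show s(Y, X) = s(X, Y) from Sym2.eq_swap,
        show s(B, X) = s(X, B) from Sym2.eq_swap, h3, h1, h5, hwXY]
      ring
    · obtain ⟨q₁, h₁, h₃, r₂, hP, hq₁e, hr₂e⟩ := split q hq r hγ
        (by rw [Sym2.eq_swap]; exact hm3) hDX (by rw [Sym2.eq_swap]; exact hm1) hBY
      refine core hG hG't w w' e he (Or.inr ⟨rfl, rfl⟩) q₁ r₂ h₁ hq h₃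
        hXD'.symm hXY' hYB' hP
        (fun f hf => hgood f (q₁.edges_subset_edgeSet hf) (hq₁e f hf).2 (hq₁e f hf).1)
        (fun f hf => hgood f (r₂.edges_subset_edgeSet hf) (hr₂e f hf).2 (hr₂e f hf).1)
        ?_
      rw [show s(D, X) = s(X, D) from Sym2.eq_swap, show s(D, Y) = s(Y, D) from Sym2.eq_swap,
        show s(Y, X) = s(X, Y) from Sym2.eq_swap, h5, h1, h3, hwXY]
      ring


end MinFill
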